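/- Let p be a prime, k a commutative ring with p·1 = 0, R a commutative k-algebra, ∂ : R → R a k-linear derivation, and r ∈ R. Let r∂ denote the derivation x ↦ r·∂(x). Then, as k-linear endomorphisms of R, (r∂)^p = r^p·∂^p + ((r∂)^{p−1}(r))·∂; that is, for every x ∈ R, (r∂)^p(x) = r^p·∂^p(x) + ((r∂)^{p−1}(r))·∂(x), where (r∂)^{p−1} is the (p−1)-fold composite of r∂ and powers denote composition. -/

import Mathlib

open MvPolynomial Finset Function

section Leibniz

variable {R : Type*} [CommRing R]

private lemma hms.done0 (D : R → R) (hadd : ∀ a b, D (a + b) = D a + D b) : D 0 = 0 := by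
  have h := hadd 0 0
  simp only [add_zero] at h
  exact (add_left_cancel (show D 0 + 0 = D 0 + D 0 by rw [add_zero]; exact h)).symm

private lemma hms.done1 (D : R → R) (hmul : ∀ a b, D (a * b) = a * D b + D a * b) : D 1 = 0 := by
  have h := hmul 1 1
  simp only [mul_one, one_mul] at h
  exact (add_left_cancel (show D 1 + 0 = D 1 + D 1 by rw [add_zero]; exact h)).symm

private lemma hms.dsum (D : R → R) (hadd : ∀ a b, D (a + b) = D a + D b)
    {ι : Type*} (s : Finset ι) (f : ι → R) : D (∑ i ∈ s, f i) = ∑ i ∈ s, D (f i) :=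
  map_sum (AddMonoidHom.mk' D hadd) f s

private lemma hms.dnsmul (D : R → R) (hadd : ∀ a b, D (a + b) = D a + D b)
    (n : ℕ) (a : R) : D (n • a) = n • D a :=
  map_nsmul (AddMonoidHom.mk' D hadd) n a

/-- iterated Leibniz rule (binomial form) for an additive Leibniz map. -/
private lemma hms.iter_leibniz (D : R → R) (hadd : ∀ a b, D (a + b) = D a + D b)
    (hmul : ∀ a b, D (a * b) = a * D b + D a * b) (n : ℕ) (a b : R) :
    D^[n] (a * b) =
      ∑ i ∈ range (n + 1), n.choose i • (D^[n - i] a * D^[i] b) := by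
  induction n with
  | zero => simp
  | succ n IH =>
    have step1 : D^[n + 1] (a * b) =
        (∑ i ∈ range (n + 1), n.choose i • (D^[n - i + 1] a * D^[i] b)) +
          ∑ i ∈ range (n + 1), n.choose i • (D^[n - i] a * D^[i + 1] b) := by
      rw [Function.iterate_succ_apply', IH, hms.dsum D hadd, ← sum_add_distrib]
      refine sum_congr rfl fun i _ => ?_
      rw [hms.dnsmul D hadd, hmul, ← smul_add, Function.iterate_succ_apply',
        Function.iterate_succ_apply']
      ring_nf
    have step2 : (∑ i ∈ range (n + 1), n.choose i • (D^[n - i + 1] a * D^[i] b)) =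
        (∑ i ∈ range (n + 1), n.choose (i + 1) • (D^[n - i] a * D^[i + 1] b)) +
          1 • (D^[n + 1] a * D^[0] b) := by
      rw [sum_range_succ' _ n]
      congr 1
      · rw [sum_range_succ, Nat.choose_succ_self, zero_smul, add_zero]
        refine sum_congr rfl fun i hi => ?_
        rw [mem_range] at hi
        have e : n - (i + 1) + 1 = n - i := by omega
        rw [e]
      · rw [Nat.choose_zero_right, Nat.sub_zero]
    rw [step1, step2, add_right_comm, ← sum_add_distrib]
    have step3 : ∀ i ∈ range (n + 1),
        (n.choose (i + 1) • (D^[n - i] a * D^[i + 1] b) +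
          n.choose i • (D^[n - i] a * D^[i + 1] b)) =
        ((n + 1).choose (i + 1)) • (D^[n + 1 - (i + 1)] a * D^[i + 1] b) := by
      intro i hi
      rw [Nat.choose_succ_succ', add_smul, Nat.succ_sub_succ, add_comm]
    rw [sum_congr rfl step3, sum_range_succ' (fun i => (n + 1).choose i •
      (D^[n + 1 - i] a * D^[i] b)) (n + 1)]
    simp

private lemma hms.iter_p_leibniz {p : ℕ} (hp : p.Prime) (hchar : (p : R) = 0)
    (D : R → R) (hadd : ∀ a b, D (a + b) = D a + D b)
    (hmul : ∀ a b, D (a * b) = a * D b + D a * b) (a b : R) :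
    D^[p] (a * b) = D^[p] a * b + a * D^[p] b := by
  rw [hms.iter_leibniz D hadd hmul p a b]
  rw [← Finset.sum_subset (s₁ := ({0, p} : Finset ℕ))
      (by
        intro i hi
        simp only [Finset.mem_insert, Finset.mem_singleton] at hi
        rcases hi with h | h <;> simp [h, Nat.lt_succ_iff])
      (by
        intro i hi hni
        simp only [Finset.mem_insert, Finset.mem_singleton, not_or] at hni
        rw [mem_range, Nat.lt_succ_iff] at hi
        obtain ⟨c, hc⟩ := hp.dvd_choose_self hni.1 (lt_of_le_of_ne hi hni.2)
        rw [hc, nsmul_eq_mul]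
        push_cast
        rw [hchar, zero_mul, zero_mul])]
  rw [Finset.sum_pair (Ne.symm hp.ne_zero)]
  simp

end Leibniz

section Univ

variable (p : ℕ)

/-- the shift derivation on the universal ring. -/
noncomputable def hmsD : Derivation (ZMod p) (MvPolynomial ℕ (ZMod p)) (MvPolynomial ℕ (ZMod p)) :=
  mkDerivation _ (fun i => X (i + 1))

/-- universal coefficients in Hochschild's formula. -/
noncomputable def hmsQ : ℕ → ℕ → MvPolynomial ℕ (ZMod p)
  | 0, 0 => 1
  | 0, _ + 1 => 0
  | _ + 1, 0 => 0
  | n + 1, k + 1 => X 0 * hmsD p (hmsQ n (k + 1)) + X 0 * hmsQ n k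

lemma hmsQ_zero_of_gt : ∀ n k, n < k → hmsQ p n k = 0 := by
  intro n
  induction n with
  | zero => intro k hk; cases k with
    | zero => omega
    | succ k => rfl
  | succ n IH =>
    intro k hk
    cases k with
    | zero => omega
    | succ k =>
      show X 0 * hmsD p (hmsQ p n (k + 1)) + X 0 * hmsQ p n k = 0
      rw [IH (k + 1) (by omega), IH k (by omega)]
      simp

lemma hmsQ_diag : ∀ n, hmsQ p n n = X 0 ^ n := by
  intro n
  induction n with
  | zero => rfl
  | succ n IH =>
    show X 0 * hmsD p (hmsQ p n (n + 1)) + X 0 * hmsQ p n n = X 0 ^ (n + 1)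
    rw [hmsQ_zero_of_gt p n (n + 1) (by omega), map_zero, mul_zero, zero_add, IH, pow_succ]
    ring

lemma hmsQ_zero (n : ℕ) (hn : 1 ≤ n) : hmsQ p n 0 = 0 := by
  cases n with
  | zero => omega
  | succ m => rfl

end Univ

section Spec

variable {p : ℕ} {R : Type*} [CommRing R] (ψ : ZMod p →+* R) (D : R → R)
  (hadd : ∀ a b, D (a + b) = D a + D b)
  (hmul : ∀ a b, D (a * b) = a * D b + D a * b)
  (hψ : ∀ c, D (ψ c) = 0) (r : R)

include hadd hmul hψ in
/-- the specialization intertwines the shift derivation with `D`. -/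
lemma hms_phi_d (q : MvPolynomial ℕ (ZMod p)) :
    eval₂Hom ψ (fun i => D^[i] r) (hmsD p q) = D (eval₂Hom ψ (fun i => D^[i] r) q) := by
  induction q using MvPolynomial.induction_on with
  | C c => rw [derivation_C, map_zero, eval₂Hom_C, hψ]
  | add f g hf hg =>
    rw [map_add, map_add, map_add, hf, hg, hadd]
  | mul_X f i hf =>
    have hX : hmsD p (X i) = X (i + 1) := mkDerivation_X _ _ _
    rw [Derivation.leibniz, hX, smul_eq_mul, smul_eq_mul, map_add, map_mul, map_mul,
      eval₂Hom_X', eval₂Hom_X', hf, map_mul, eval₂Hom_X', hmul,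
      Function.iterate_succ_apply']
    ring

include hadd hmul hψ in
/-- Lemma A: expansion of `(rD)^[n]` in terms of universal coefficients. -/
lemma hms_lemA : ∀ n x, (fun a => r * D a)^[n] x =
    ∑ k ∈ range (n + 1), eval₂Hom ψ (fun i => D^[i] r) (hmsQ p n k) * D^[k] x := by
  intro n
  induction n with
  | zero => intro x; simp [hmsQ]
  | succ n IH =>
    intro x
    rw [Function.iterate_succ_apply']
    show r * D ((fun a => r * D a)^[n] x) = _
    rw [IH x, hms.dsum D hadd]
    have hterm : ∀ k, D (eval₂Hom ψ (fun i => D^[i] r) (hmsQ p n k) * D^[k] x) =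
        eval₂Hom ψ (fun i => D^[i] r) (hmsQ p n k) * D^[k + 1] x +
          D (eval₂Hom ψ (fun i => D^[i] r) (hmsQ p n k)) * D^[k] x := by
      intro k
      rw [hmul, Function.iterate_succ_apply']
    simp_rw [hterm]
    rw [sum_add_distrib, mul_add, Finset.mul_sum, Finset.mul_sum]
    -- second piece
    have hQ0 : D (eval₂Hom ψ (fun i => D^[i] r) (hmsQ p n 0)) = 0 := by
      cases n with
      | zero =>
        show D (eval₂Hom ψ (fun i => D^[i] r) 1) = 0
        rw [map_one, hms.done1 D hmul]
      | succ n =>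
        rw [hmsQ_zero p (n + 1) (by omega), map_zero, hms.done0 D hadd]
    have e2 : ∑ k ∈ range (n + 1),
        r * (D (eval₂Hom ψ (fun i => D^[i] r) (hmsQ p n k)) * D^[k] x) =
        ∑ k ∈ range (n + 1),
          r * (D (eval₂Hom ψ (fun i => D^[i] r) (hmsQ p n (k + 1))) * D^[k + 1] x) := by
      rw [sum_range_succ' _ n, sum_range_succ, hmsQ_zero_of_gt p n (n + 1) (by omega),
        hQ0, map_zero, hms.done0 D hadd]
      simp
    rw [e2]
    rw [sum_range_succ' (fun k => eval₂Hom ψ (fun i => D^[i] r) (hmsQ p (n + 1) k) * D^[k] x) (n + 1),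
      hmsQ_zero p (n + 1) (by omega), map_zero, zero_mul, add_zero, ← sum_add_distrib]
    refine sum_congr rfl fun k _ => ?_
    show r * (eval₂Hom ψ (fun i => D^[i] r) (hmsQ p n k) * D^[k + 1] x) +
        r * (D (eval₂Hom ψ (fun i => D^[i] r) (hmsQ p n (k + 1))) * D^[k + 1] x) =
      eval₂Hom ψ (fun i => D^[i] r) (hmsQ p (n + 1) (k + 1)) * D^[k + 1] x
    show _ = eval₂Hom ψ (fun i => D^[i] r)
        (X 0 * hmsD p (hmsQ p n (k + 1)) + X 0 * hmsQ p n k) * D^[k + 1] x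
    rw [map_add, map_mul, map_mul, eval₂Hom_X', hms_phi_d ψ D hadd hmul hψ r]
    show _ = (D^[0] r * D (eval₂Hom ψ (fun i => D^[i] r) (hmsQ p n (k + 1))) +
      D^[0] r * eval₂Hom ψ (fun i => D^[i] r) (hmsQ p n k)) * D^[k + 1] x
    show _ = (r * _ + r * _) * D^[k+1] x
    ring

include hadd hmul hψ in
lemma hms_Q_one : ∀ n, eval₂Hom ψ (fun i => D^[i] r) (hmsQ p (n + 1) 1) =
    (fun a => r * D a)^[n] r := by
  intro n
  induction n with
  | zero =>
    show eval₂Hom ψ (fun i => D^[i] r) (X 0 * hmsD p (hmsQ p 0 1) + X 0 * hmsQ p 0 0) = r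
    show eval₂Hom ψ (fun i => D^[i] r) (X 0 * hmsD p 0 + X 0 * 1) = r
    rw [map_zero, mul_zero, zero_add, mul_one, eval₂Hom_X']
    rfl
  | succ n IH =>
    show eval₂Hom ψ (fun i => D^[i] r)
      (X 0 * hmsD p (hmsQ p (n + 1) 1) + X 0 * hmsQ p (n + 1) 0) = _
    rw [hmsQ_zero p (n + 1) (by omega), mul_zero, add_zero, map_mul, eval₂Hom_X',
      hms_phi_d ψ D hadd hmul hψ r, IH, Function.iterate_succ_apply']
    rfl

end Spec

section LemC

variable (p : ℕ)

/-- derivation on the big universal ring. -/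
noncomputable def hmsDT : Derivation (ZMod p) (MvPolynomial (Option ℕ ⊕ ℕ) (ZMod p))
    (MvPolynomial (Option ℕ ⊕ ℕ) (ZMod p)) :=
  mkDerivation _ (fun s => match s with
    | .inl (some i) => X (.inl (some (i + 1)))
    | .inl none => 1
    | .inr i => X (.inr (i + 1)))

lemma hmsDT_X_a (i : ℕ) : hmsDT p (X (.inl (some i))) = X (.inl (some (i + 1))) :=
  mkDerivation_X _ _ _

lemma hmsDT_X_u : hmsDT p (X (.inl none)) = 1 := mkDerivation_X _ _ _

lemma hmsDT_X_b (i : ℕ) : hmsDT p (X (.inr i)) = X (.inr (i + 1)) := mkDerivation_X _ _ _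

lemma hmsDT_iter_a : ∀ i j, (⇑(hmsDT p))^[i] (X (.inl (some j))) = X (.inl (some (j + i))) := by
  intro i
  induction i with
  | zero => intro j; simp
  | succ i IH =>
    intro j
    rw [Function.iterate_succ_apply, hmsDT_X_a, IH]
    have e : j + 1 + i = j + (i + 1) := by omega
    rw [e]

lemma hmsDT_iter_b : ∀ i j, (⇑(hmsDT p))^[i] (X (.inr j)) = X (.inr (j + i)) := by
  intro i
  induction i with
  | zero => intro j; simp
  | succ i IH =>
    intro j
    rw [Function.iterate_succ_apply, hmsDT_X_b, IH]
    have e : j + 1 + i = j + (i + 1) := by omega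
    rw [e]

lemma hmsDT_iter_u (k : ℕ) : (⇑(hmsDT p))^[k + 2] (X (.inl none)) = 0 := by
  rw [Function.iterate_succ_apply, Function.iterate_succ_apply, hmsDT_X_u,
    Derivation.map_one_eq_zero, Function.iterate_fixed (map_zero _)]

lemma hmsDT_iter_ub (m : ℕ) (y : MvPolynomial (Option ℕ ⊕ ℕ) (ZMod p)) :
    (⇑(hmsDT p))^[m] (X (.inl none) * y) =
      X (.inl none) * (⇑(hmsDT p))^[m] y + m • (⇑(hmsDT p))^[m - 1] y := by
  induction m with
  | zero => simp
  | succ m IH =>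
    rw [Function.iterate_succ_apply', IH, map_add, Derivation.leibniz, smul_eq_mul, smul_eq_mul,
      hmsDT_X_u]
    have e1 : (hmsDT p) ((⇑(hmsDT p))^[m] y) = (⇑(hmsDT p))^[m + 1] y :=
      (Function.iterate_succ_apply' (⇑(hmsDT p)) m y).symm
    cases m with
    | zero => simp [e1]
    | succ n =>
      have e2 : (hmsDT p) ((n + 1) • (⇑(hmsDT p))^[n + 1 - 1] y) =
          (n + 1) • (⇑(hmsDT p))^[n + 1] y := by
        rw [Nat.succ_sub_one, map_nsmul, ← Function.iterate_succ_apply' (⇑(hmsDT p)) n y]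
      rw [e1, e2, Nat.succ_sub_one, mul_one]
      have e3 : (n + 1 + 1) • (⇑(hmsDT p))^[n + 1] y =
          (n + 1) • (⇑(hmsDT p))^[n + 1] y + (⇑(hmsDT p))^[n + 1] y :=
        succ_nsmul _ (n + 1)
      rw [e3, add_assoc, add_comm ((⇑(hmsDT p))^[n + 1] y) ((n + 1) • (⇑(hmsDT p))^[n + 1] y)]

lemma hms_ev_ι (g : Option ℕ ⊕ ℕ → MvPolynomial ℕ (ZMod p))
    (hg : ∀ i, g (.inl (some i)) = X i) (q : MvPolynomial ℕ (ZMod p)) :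
    eval₂Hom (C : ZMod p →+* MvPolynomial ℕ (ZMod p)) g
      (eval₂Hom (C : ZMod p →+* MvPolynomial (Option ℕ ⊕ ℕ) (ZMod p))
        (fun i => X (.inl (some i))) q) = q := by
  induction q using MvPolynomial.induction_on with
  | C c => rw [eval₂Hom_C, eval₂Hom_C]
  | add f g hf hg => rw [map_add, map_add, hf, hg]
  | mul_X f i hf => rw [map_mul, map_mul, hf, eval₂Hom_X', eval₂Hom_X', hg]

/-- Lemma C: the middle universal coefficients vanish. -/
lemma hmsQ_mid (hp : p.Prime) (k₀ : ℕ) (h2 : 2 ≤ k₀) (hk : k₀ < p) : hmsQ p p k₀ = 0 := by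
  haveI : Fact p.Prime := ⟨hp⟩
  have hp2 : 2 ≤ p := hp.two_le
  set T := MvPolynomial (Option ℕ ⊕ ℕ) (ZMod p) with hT
  set D' : T → T := ⇑(hmsDT p) with hD'
  set u : T := X (.inl none) with hu
  set rT : T := X (.inl (some 0)) with hrT
  have hadd' : ∀ a b : T, D' (a + b) = D' a + D' b := fun a b => map_add _ a b
  have hmul' : ∀ a b : T, D' (a * b) = a * D' b + D' a * b := by
    intro a b
    rw [hD', Derivation.leibniz, smul_eq_mul, smul_eq_mul]
    ring
  have hψ' : ∀ c : ZMod p, D' ((C : ZMod p →+* T) c) = 0 := fun c => derivation_C _ c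
  set ι := eval₂Hom (C : ZMod p →+* T) (fun i => X (.inl (some i))) with hι
  -- Lemma A in T, with specialization map = ι
  have hfun : (fun i => D'^[i] rT) = (fun i : ℕ => (X (.inl (some i)) : T)) := by
    funext i
    rw [hD', hrT, hmsDT_iter_a, Nat.zero_add]
  have hA : ∀ x : T, (fun a => rT * D' a)^[p] x =
      ∑ k ∈ range (p + 1), ι (hmsQ p p k) * D'^[k] x := by
    intro x
    have := hms_lemA (C : ZMod p →+* T) D' hadd' hmul' hψ' rT p x
    rw [hfun] at this
    exact this
  -- char p collapse for δ = rT * D'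
  have charT : (p : T) = 0 := by
    rw [← map_natCast (C : ZMod p →+* T) p, ZMod.natCast_self, map_zero]
  have collapse : ∀ a b : T, (fun a => rT * D' a)^[p] (a * b) =
      (fun a => rT * D' a)^[p] a * b + a * (fun a => rT * D' a)^[p] b := by
    intro a b
    refine hms.iter_p_leibniz hp charT _ ?_ ?_ a b
    · intro a b; show rT * D' (a + b) = rT * D' a + rT * D' b; rw [hadd']; ring
    · intro a b; show rT * D' (a * b) = a * (rT * D' b) + rT * D' a * b; rw [hmul']; ring
  -- sum over derivatives of u
  have hsum_u : ∑ k ∈ range (p + 1), ι (hmsQ p p k) * D'^[k] u = ι (hmsQ p p 1) := by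
    rw [← Finset.sum_subset (s₁ := ({0, 1} : Finset ℕ))
        (by
          intro i hi
          simp only [Finset.mem_insert, Finset.mem_singleton] at hi
          rcases hi with h | h <;> subst h <;> rw [mem_range] <;> omega)
        (by
          intro i hi hni
          simp only [Finset.mem_insert, Finset.mem_singleton, not_or] at hni
          obtain ⟨j, rfl⟩ : ∃ j, i = j + 2 := ⟨i - 2, by omega⟩
          rw [hD', hu, hmsDT_iter_u, mul_zero])]
    rw [Finset.sum_pair (by omega : (0:ℕ) ≠ 1)]
    rw [hmsQ_zero p p (by omega : 1 ≤ p), map_zero, zero_mul, zero_add]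
    show ι (hmsQ p p 1) * D' u = _
    rw [hD', hu, hmsDT_X_u, mul_one]
  -- the key identity
  have hkey : ∀ y : T, ∑ k ∈ range (p + 1), k • (ι (hmsQ p p k) * D'^[k - 1] y) =
      ι (hmsQ p p 1) * y := by
    intro y
    have h1 : ∑ k ∈ range (p + 1), ι (hmsQ p p k) * D'^[k] (u * y) =
        ι (hmsQ p p 1) * y + u * ∑ k ∈ range (p + 1), ι (hmsQ p p k) * D'^[k] y := by
      rw [← hA (u * y), collapse u y, hA u, hA y, hsum_u]
    have h2 : ∑ k ∈ range (p + 1), ι (hmsQ p p k) * D'^[k] (u * y) =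
        (∑ k ∈ range (p + 1), u * (ι (hmsQ p p k) * D'^[k] y)) +
          ∑ k ∈ range (p + 1), k • (ι (hmsQ p p k) * D'^[k - 1] y) := by
      rw [← sum_add_distrib]
      refine sum_congr rfl fun k _ => ?_
      rw [hD', hu, hmsDT_iter_ub, mul_add, mul_smul_comm]
      ring_nf
      simp only [mul_comm, mul_assoc, mul_left_comm]
    rw [h2, Finset.mul_sum] at h1
    rw [add_comm] at h1
    exact add_right_cancel h1
  -- specialize y and extract the coefficient
  have hb : ∀ m : ℕ, D'^[m] (X (.inr 0) : T) = X (.inr m) := by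
    intro m
    rw [hD', hmsDT_iter_b, Nat.zero_add]
  have hid := hkey (X (.inr 0))
  simp_rw [hb] at hid
  -- evaluation map killing everything except the b-variable `k₀ - 1`
  set g : Option ℕ ⊕ ℕ → MvPolynomial ℕ (ZMod p) := fun s => match s with
    | .inl (some i) => X i
    | .inl none => 0
    | .inr i => if i = k₀ - 1 then 1 else 0 with hg
  set ev := eval₂Hom (C : ZMod p →+* MvPolynomial ℕ (ZMod p)) g with hev
  have hev_ι : ∀ q, ev (ι q) = q := hms_ev_ι p g (fun i => rfl)
  have hev_b : ∀ m : ℕ, ev (X (.inr m) : T) = if m = k₀ - 1 then 1 else 0 := fun m =>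
    eval₂Hom_X' _ _ _
  have := congrArg ev hid
  rw [map_sum, map_mul, hev_ι, hev_b] at this
  rw [if_neg (by omega : ¬ (0 = k₀ - 1)), mul_zero] at this
  rw [Finset.sum_eq_single k₀
      (by
        intro k hk hne
        rw [map_nsmul, map_mul, hev_ι, hev_b]
        by_cases hcase : k - 1 = k₀ - 1
        · have : k = 0 := by omega
          subst this
          simp
        · rw [if_neg hcase, mul_zero, smul_zero])
      (by intro h; exact absurd (mem_range.mpr (by omega)) h)] at this
  rw [map_nsmul, map_mul, hev_ι, hev_b, if_pos (by omega : k₀ - 1 = k₀ - 1), mul_one] at this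
  -- now: k₀ • hmsQ p p k₀ = 0
  have hne : ((k₀ : ZMod p)) ≠ 0 := by
    rw [Ne, ZMod.natCast_eq_zero_iff]
    intro hd
    exact absurd (Nat.le_of_dvd (by omega) hd) (by omega)
  have hC : (C (k₀ : ZMod p) : MvPolynomial ℕ (ZMod p)) ≠ 0 := by
    rw [Ne, map_eq_zero_iff C (C_injective ℕ (ZMod p))]
    exact hne
  have : (C (k₀ : ZMod p) : MvPolynomial ℕ (ZMod p)) * hmsQ p p k₀ = 0 := by
    rw [← this, nsmul_eq_mul, map_natCast]
  rcases mul_eq_zero.mp this with h | h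
  · exact absurd h hC
  · exact h

end LemC

/-- **Hochschild's formula for derivations.** In characteristic `p`, for a `k`-linear
derivation `∂` of a commutative `k`-algebra `R` and `r ∈ R`, one has
`(r∂)^p = r^p·∂^p + ((r∂)^{p−1}(r))·∂` as `k`-linear endomorphisms of `R`. -/
theorem smul_derivation_pow_p (p : ℕ) (hp : p.Prime)
    (k : Type*) [CommRing k] (R : Type*) [CommRing R] [Algebra k R]
    (hchar : (p : k) = 0) (D : R →ₗ[k] R)
    (hD : ∀ a b : R, D (a * b) = a * D b + D a * b) (r : R) :
    ∀ x : R, (fun a => r * D a)^[p] x =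
      r ^ p * (⇑D)^[p] x + (fun a => r * D a)^[p - 1] r * D x := by
  intro x
  haveI : Fact p.Prime := ⟨hp⟩
  have hpR : (p : R) = 0 := by
    rw [← map_natCast (algebraMap k R) p, hchar, map_zero]
  haveI : CharP R (ringChar R) := ringChar.charP R
  set ψ : ZMod p →+* R := ZMod.castHom (ringChar.dvd hpR) R with hψdef
  have hψ : ∀ c : ZMod p, D (ψ c) = 0 := by
    intro c
    have hc : ((c.val : ℕ) : ZMod p) = c := ZMod.natCast_rightInverse c
    have h1 : ψ c = ((c.val : ℕ) : R) := by
      conv_lhs => rw [← hc]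
      rw [map_natCast]
    have h2 : ((c.val : ℕ) : R) = c.val • (1 : R) := by rw [nsmul_eq_mul, mul_one]
    rw [h1, h2, map_nsmul, hms.done1 ⇑D hD, smul_zero]
  have hadd : ∀ a b : R, D (a + b) = D a + D b := fun a b => map_add D a b
  rw [hms_lemA ψ ⇑D hadd hD hψ r p x]
  rw [← Finset.sum_subset (s₁ := ({1, p} : Finset ℕ))
      (by
        intro i hi
        simp only [Finset.mem_insert, Finset.mem_singleton] at hi
        have := hp.two_le
        rcases hi with h | h <;> subst h <;> rw [mem_range] <;> omega)
      (by
        intro i hi hni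
        simp only [Finset.mem_insert, Finset.mem_singleton, not_or] at hni
        rw [mem_range, Nat.lt_succ_iff] at hi
        rcases Nat.eq_zero_or_pos i with h0 | h0
        · subst h0
          rw [hmsQ_zero p p hp.one_lt.le, map_zero, zero_mul]
        · rw [hmsQ_mid p hp i (by omega) (lt_of_le_of_ne hi hni.2), map_zero, zero_mul])]
  rw [Finset.sum_pair (by have := hp.two_le; omega : (1:ℕ) ≠ p)]
  obtain ⟨m, rfl⟩ : ∃ m, p = m + 1 := ⟨p - 1, by have := hp.two_le; omega⟩
  rw [hms_Q_one ψ ⇑D hadd hD hψ r m, hmsQ_diag, map_pow, eval₂Hom_X']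
  rw [add_comm]
  norm_num
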